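/- arXiv:math/9903163 — 2 statements merged into one kernel-verified Lean document; each statement's English description precedes it below -/
import Mathlib

section
/- The ℂ-linear map from the external direct sum ⊕_{p∈ℤ} F p to the quotient ξ(V,F)/(λ·ξ(V,F)) that sends an element v of the p-th summand F p to the class of v ⊗ λ^{−p} is surjective, and its kernel is exactly ⊕_{p∈ℤ} F (p+1) (with F(p+1) regarded as a subspace of the p-th summand F p). In particular ξ(V,F)/(λ·ξ(V,F)) is ℂ-linearly isomorphic to the associated graded space ⊕_{p∈ℤ} F p / F (p+1). (This is the paper's assertion that the fiber of the Rees sheaf ξ(V,F) at 0 ∈ 𝔸¹ is the associated graded of V, so that ξ(V,F) is a canonical deformation of V to Gr_F(V).) -/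
noncomputable section
open Polynomial LaurentPolynomial TensorProduct DirectSum

set_option maxSynthPendingDepth 3

/-- `ℂ[λ]` (that is, `Polynomial ℂ`) acts on `ℂ[λ,λ⁻¹]` (that is, `LaurentPolynomial ℂ`)
compatibly with the `ℂ`-actions. -/
instance : IsScalarTower ℂ (Polynomial ℂ) (LaurentPolynomial ℂ) :=
  IsScalarTower.of_algebraMap_eq fun c => by
    simp [LaurentPolynomial.algebraMap_eq_toLaurent, Polynomial.algebraMap_eq]

/-- The Rees module `ξ(V,F)` of a filtered complex vector space `(V,F)`: the `ℂ[λ]`-submodule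
of `V ⊗_ℂ ℂ[λ,λ⁻¹]` (realized here as `ℂ[λ,λ⁻¹] ⊗_ℂ V`) generated by the elements
`v ⊗ λ^{-p} = T (-p) ⊗ v` with `p ∈ ℤ` and `v ∈ F p`. -/
def ReesModule (V : Type*) [AddCommGroup V] [Module ℂ V] (F : ℤ → Submodule ℂ V) :
    Submodule (Polynomial ℂ) ((LaurentPolynomial ℂ) ⊗[ℂ] V) :=
  Submodule.span (Polynomial ℂ)
    {x | ∃ (p : ℤ) (v : V), v ∈ F p ∧ x = (LaurentPolynomial.T (-p)) ⊗ₜ[ℂ] v}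

variable {V : Type*} [AddCommGroup V] [Module ℂ V] (F : ℤ → Submodule ℂ V)

/-- `λ·ξ(V,F)`, as a `ℂ[λ]`-submodule of `ξ(V,F)`. -/
def lambdaRees : Submodule (Polynomial ℂ) ↥(ReesModule V F) :=
  Ideal.span {(Polynomial.X : Polynomial ℂ)} • ⊤

/-- The `ℂ`-linear map `F p → ξ(V,F)/(λ·ξ(V,F))` sending `v` to the class of
`v ⊗ λ^{-p} = T (-p) ⊗ v`. -/
def gradedToReesFiberZero (p : ℤ) :
    ↥(F p) →ₗ[ℂ] (↥(ReesModule V F) ⧸ lambdaRees F) :=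
  ((lambdaRees F).mkQ.restrictScalars ℂ).comp
    (LinearMap.codRestrict ((ReesModule V F).restrictScalars ℂ)
      ((TensorProduct.mk ℂ (LaurentPolynomial ℂ) V (LaurentPolynomial.T (-p))).comp
        (F p).subtype)
      (fun v => Submodule.subset_span ⟨p, v.1, v.2, rfl⟩))

/-- The `ℂ`-linear map `⊕_p F p → ξ(V,F)/(λ·ξ(V,F))` sending an element `v` of the `p`-th
summand to the class of `v ⊗ λ^{-p}`. -/
def reesGradedMap : (⨁ p : ℤ, ↥(F p)) →ₗ[ℂ] (↥(ReesModule V F) ⧸ lambdaRees F) :=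
  DirectSum.toModule ℂ ℤ _ (gradedToReesFiberZero F)

/-! ### Auxiliary definitions -/

/-- The coefficient-extraction map on Laurent polynomials. -/
def coeffL (n : ℤ) : LaurentPolynomial ℂ →ₗ[ℂ] ℂ :=
  (Finsupp.lapply n).comp (AddMonoidAlgebra.coeffLinearEquiv ℂ).toLinearMap

theorem coeffL_T (m n : ℤ) : coeffL n (LaurentPolynomial.T m) = if m = n then 1 else 0 := by
  show (LaurentPolynomial.T m : LaurentPolynomial ℂ).coeff n = _
  exact LaurentPolynomial.T_apply n m

theorem coeffL_T_mul (n : ℤ) (f : LaurentPolynomial ℂ) :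
    coeffL n (LaurentPolynomial.T 1 * f) = coeffL (n - 1) f := by
  show (AddMonoidAlgebra.single (1 : ℤ) (1 : ℂ) * f).coeff n = f.coeff (n - 1)
  rw [AddMonoidAlgebra.coeff_single_mul_apply, one_mul]
  congr 1
  ring

/-- Coefficient extraction on `ℂ[λ,λ⁻¹] ⊗ V`. -/
def coeffV (n : ℤ) : (LaurentPolynomial ℂ ⊗[ℂ] V) →ₗ[ℂ] V :=
  TensorProduct.lift ((LinearMap.lsmul ℂ V).comp (coeffL n))

variable {F}

theorem coeffV_tmul (n : ℤ) (f : LaurentPolynomial ℂ) (v : V) :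
    coeffV n (f ⊗ₜ[ℂ] v) = coeffL n f • v := rfl

theorem coeffV_T (m n : ℤ) (v : V) :
    coeffV n (LaurentPolynomial.T m ⊗ₜ[ℂ] v) = if m = n then v else 0 := by
  rw [coeffV_tmul, coeffL_T]
  split <;> simp

theorem X_smul_tmul (f : LaurentPolynomial ℂ) (v : V) :
    (Polynomial.X : Polynomial ℂ) • (f ⊗ₜ[ℂ] v) = (LaurentPolynomial.T 1 * f) ⊗ₜ[ℂ] v := by
  rw [TensorProduct.smul_tmul']
  congr 1
  rw [Algebra.smul_def]
  congr 1
  exact Polynomial.toLaurent_X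

theorem coeffV_X_smul (n : ℤ) (z : LaurentPolynomial ℂ ⊗[ℂ] V) :
    coeffV n ((Polynomial.X : Polynomial ℂ) • z) = coeffV (n - 1) z := by
  induction z using TensorProduct.induction_on with
  | zero => simp
  | tmul f v => rw [X_smul_tmul, coeffV_tmul, coeffV_tmul, coeffL_T_mul]
  | add a b ha hb => rw [smul_add, map_add, map_add, ha, hb]

variable (F)

/-- The generating set of the Rees module. -/
def reesGen : Set (LaurentPolynomial ℂ ⊗[ℂ] V) :=
  {x | ∃ (p : ℤ) (v : V), v ∈ F p ∧ x = (LaurentPolynomial.T (-p)) ⊗ₜ[ℂ] v}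

/-- The `ℂ`-span of the generators. -/
def spanC : Submodule ℂ (LaurentPolynomial ℂ ⊗[ℂ] V) := Submodule.span ℂ (reesGen F)

variable {F}

theorem X_smul_mem_spanC (hdec : ∀ p : ℤ, F (p + 1) ≤ F p)
    {x : LaurentPolynomial ℂ ⊗[ℂ] V} (hx : x ∈ spanC F) :
    (Polynomial.X : Polynomial ℂ) • x ∈ spanC F := by
  induction hx using Submodule.span_induction with
  | mem x h =>
    obtain ⟨p, v, hv, rfl⟩ := h
    rw [X_smul_tmul, ← LaurentPolynomial.T_add, show (1 : ℤ) + -p = -(p - 1) by ring]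
    refine Submodule.subset_span ⟨p - 1, v, ?_, rfl⟩
    have := hdec (p - 1)
    rw [sub_add_cancel] at this
    exact this hv
  | zero => rw [smul_zero]; exact zero_mem _
  | add a b _ _ ha hb => rw [smul_add]; exact add_mem ha hb
  | smul c a _ ha => rw [smul_comm]; exact Submodule.smul_mem _ _ ha

theorem poly_smul_mem_spanC (hdec : ∀ p : ℤ, F (p + 1) ≤ F p)
    (q : Polynomial ℂ) {x : LaurentPolynomial ℂ ⊗[ℂ] V} (hx : x ∈ spanC F) :
    q • x ∈ spanC F := by
  induction q using Polynomial.induction_on with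
  | C a =>
    have : (Polynomial.C a) • x = a • x := by
      rw [← Polynomial.algebraMap_eq]
      exact algebraMap_smul (Polynomial ℂ) a x
    rw [this]; exact Submodule.smul_mem _ _ hx
  | add p q hp hq => rw [add_smul]; exact add_mem hp hq
  | monomial n a h =>
    have : (Polynomial.C a * Polynomial.X ^ (n + 1)) • x
        = (Polynomial.X : Polynomial ℂ) • ((Polynomial.C a * Polynomial.X ^ n) • x) := by
      rw [← mul_smul]
      congr 1
      ring
    rw [this]
    exact X_smul_mem_spanC hdec h

theorem mem_spanC_of_mem_rees (hdec : ∀ p : ℤ, F (p + 1) ≤ F p)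
    {x : LaurentPolynomial ℂ ⊗[ℂ] V} (hx : x ∈ ReesModule V F) : x ∈ spanC F := by
  induction hx using Submodule.span_induction with
  | mem x h => exact Submodule.subset_span h
  | zero => exact zero_mem _
  | add a b _ _ ha hb => exact add_mem ha hb
  | smul q a _ ha => exact poly_smul_mem_spanC hdec q ha

theorem coeffV_mem_of_mem_spanC {x : LaurentPolynomial ℂ ⊗[ℂ] V} (hx : x ∈ spanC F) (n : ℤ) :
    coeffV n x ∈ F (-n) := by
  induction hx using Submodule.span_induction with
  | mem x h =>
    obtain ⟨p, v, hv, rfl⟩ := h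
    rw [coeffV_T]
    by_cases h : -p = n
    · rw [if_pos h, show -n = p by omega]
      exact hv
    · rw [if_neg h]
      exact zero_mem _
  | zero => rw [map_zero]; exact zero_mem _
  | add a b _ _ ha hb => rw [map_add]; exact add_mem ha hb
  | smul c a _ ha => rw [map_smul]; exact Submodule.smul_mem _ _ ha

theorem coeffV_mem_of_mem_rees (hdec : ∀ p : ℤ, F (p + 1) ≤ F p)
    {x : LaurentPolynomial ℂ ⊗[ℂ] V} (hx : x ∈ ReesModule V F) (n : ℤ) :
    coeffV n x ∈ F (-n) :=
  coeffV_mem_of_mem_spanC (mem_spanC_of_mem_rees hdec hx) n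

variable (F)

/-- The direct sum of the inclusions, landing in the Rees module. -/
def reesE : (⨁ p : ℤ, ↥(F p)) →ₗ[ℂ] ((ReesModule V F).restrictScalars ℂ) :=
  DirectSum.toModule ℂ ℤ _ (fun p =>
    LinearMap.codRestrict ((ReesModule V F).restrictScalars ℂ)
      ((TensorProduct.mk ℂ (LaurentPolynomial ℂ) V (LaurentPolynomial.T (-p))).comp
        (F p).subtype)
      (fun v => Submodule.subset_span ⟨p, v.1, v.2, rfl⟩))

theorem reesGradedMap_eq :
    reesGradedMap F = ((lambdaRees F).mkQ.restrictScalars ℂ).comp (reesE F) := by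
  apply DirectSum.linearMap_ext
  intro p
  apply LinearMap.ext
  intro v
  simp only [LinearMap.comp_apply, reesGradedMap, reesE]
  erw [DirectSum.toModule_lof]

theorem coeffV_reesE (x : ⨁ p : ℤ, ↥(F p)) (n : ℤ) :
    coeffV n ((reesE F x : LaurentPolynomial ℂ ⊗[ℂ] V)) = (x (-n) : V) := by
  have : ((coeffV n).comp (((ReesModule V F).restrictScalars ℂ).subtype)).comp (reesE F)
      = (F (-n)).subtype.comp (DirectSum.component ℂ ℤ _ (-n)) := by
    apply DirectSum.linearMap_ext
    intro p
    apply LinearMap.ext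
    intro v
    simp only [LinearMap.comp_apply, reesE, DirectSum.toModule_lof]
    rw [DirectSum.component.of]
    by_cases h : p = -n
    · subst h
      simp only [dif_pos rfl]
      show coeffV n (LaurentPolynomial.T (- -n) ⊗ₜ[ℂ] (v : V)) = (v : V)
      rw [coeffV_T, if_pos (neg_neg n)]
    · rw [dif_neg h]
      show coeffV n (LaurentPolynomial.T (-p) ⊗ₜ[ℂ] (v : V)) = _
      rw [coeffV_T, if_neg (fun hc => h (by omega)), map_zero]
  have := LinearMap.congr_fun this x
  simp at this; exact this

theorem gradedToReesFiberZero_eq_zero {p : ℤ} (v : ↥(F p)) (hv : (v : V) ∈ F (p + 1)) :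
    gradedToReesFiberZero F p v = 0 := by
  show Submodule.Quotient.mk _ = (0 : _ ⧸ lambdaRees F)
  rw [Submodule.Quotient.mk_eq_zero]
  set z : ↥(ReesModule V F) :=
    ⟨LaurentPolynomial.T (-p) ⊗ₜ[ℂ] (v : V), Submodule.subset_span ⟨p, v.1, v.2, rfl⟩⟩
  set y : ↥(ReesModule V F) :=
    ⟨LaurentPolynomial.T (-(p+1)) ⊗ₜ[ℂ] (v : V), Submodule.subset_span ⟨p + 1, v, hv, rfl⟩⟩
  have hz : z = (Polynomial.X : Polynomial ℂ) • y := by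
    apply Subtype.ext
    show LaurentPolynomial.T (-p) ⊗ₜ[ℂ] (v : V)
        = (Polynomial.X : Polynomial ℂ) • (LaurentPolynomial.T (-(p+1)) ⊗ₜ[ℂ] (v : V))
    rw [X_smul_tmul, ← LaurentPolynomial.T_add]
    norm_num
  show z ∈ lambdaRees F
  rw [lambdaRees, Submodule.ideal_span_singleton_smul, hz]
  exact Submodule.smul_mem_pointwise_smul y _ ⊤ trivial

theorem spanC_le_rees : spanC F ≤ (ReesModule V F).restrictScalars ℂ :=
  Submodule.span_le.mpr fun _ ha => Submodule.subset_span ha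

set_option maxHeartbeats 1000000 in
/-- For a finite-dimensional complex vector space `V` with a decreasing,
finite and exhaustive filtration `F`, the `ℂ`-linear map `⊕_p F p → ξ(V,F)/(λ·ξ(V,F))`,
`v ↦ [v ⊗ λ^{-p}]`, is surjective with kernel exactly `⊕_p F (p+1)`; in particular
`ξ(V,F)/(λ·ξ(V,F))` is `ℂ`-linearly isomorphic to the associated graded `⊕_p F p / F (p+1)`. -/
theorem reesModule_fiber_zero_eq_gr
    [FiniteDimensional ℂ V]
    (hdec : ∀ p : ℤ, F (p + 1) ≤ F p)
    (hfin : ∃ a b : ℤ, a ≤ b ∧ (∀ p ≤ a, F p = ⊤) ∧ (∀ p, b ≤ p → F p = ⊥)) :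
    Function.Surjective (reesGradedMap F) ∧
    (∀ x : ⨁ p : ℤ, ↥(F p), reesGradedMap F x = 0 ↔ ∀ p : ℤ, (x p : V) ∈ F (p + 1)) ∧
    Nonempty ((↥(ReesModule V F) ⧸ lambdaRees F) ≃ₗ[ℂ]
      ⨁ p : ℤ, (↥(F p) ⧸ Submodule.comap (F p).subtype (F (p + 1)))) := by
  classical
  -- Surjectivity
  have hsurj : Function.Surjective (reesGradedMap F) := by
    intro q
    obtain ⟨z, rfl⟩ := (lambdaRees F).mkQ_surjective q
    have claim : ∀ (a : LaurentPolynomial ℂ ⊗[ℂ] V), a ∈ spanC F →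
        ∀ h : a ∈ ReesModule V F,
        ∃ x, reesGradedMap F x = Submodule.Quotient.mk ⟨a, h⟩ := by
      intro a ha
      induction ha using Submodule.span_induction with
      | mem a h =>
        intro hmem
        obtain ⟨p, v, hv, rfl⟩ := h
        refine ⟨DirectSum.lof ℂ ℤ _ p ⟨v, hv⟩, ?_⟩
        rw [reesGradedMap, DirectSum.toModule_lof]
        rfl
      | zero =>
        intro hm
        exact ⟨0, by rw [map_zero]; exact (Submodule.Quotient.mk_eq_zero _).mpr (zero_mem _) |>.symm⟩
      | add a b ha hb iha ihb =>
        intro hm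
        obtain ⟨xa, hxa⟩ := iha (spanC_le_rees F ha)
        obtain ⟨xb, hxb⟩ := ihb (spanC_le_rees F hb)
        refine ⟨xa + xb, ?_⟩
        rw [map_add, hxa, hxb, ← Submodule.Quotient.mk_add]
        exact congrArg _ (Subtype.ext rfl)
      | smul c a ha iha =>
        intro hm
        obtain ⟨xa, hxa⟩ := iha (spanC_le_rees F ha)
        refine ⟨c • xa, ?_⟩
        rw [map_smul, hxa, ← Submodule.Quotient.mk_smul]
        exact congrArg _ (Subtype.ext rfl)
    obtain ⟨x, hx⟩ := claim z.1 (mem_spanC_of_mem_rees hdec z.2) z.2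
    exact ⟨x, hx⟩
  -- Kernel
  have hker : ∀ x : ⨁ p : ℤ, ↥(F p),
      reesGradedMap F x = 0 ↔ ∀ p : ℤ, (x p : V) ∈ F (p + 1) := by
    intro x
    constructor
    · intro h0
      rw [reesGradedMap_eq] at h0
      change Submodule.Quotient.mk (p := lambdaRees F) (⟨(reesE F x).1, (reesE F x).2⟩ : ↥(ReesModule V F)) = 0 at h0
      rw [Submodule.Quotient.mk_eq_zero] at h0
      rw [lambdaRees, Submodule.ideal_span_singleton_smul] at h0
      obtain ⟨y, -, hy⟩ := Submodule.mem_map.mp h0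
      intro p
      have hval : (Polynomial.X : Polynomial ℂ) • (y : LaurentPolynomial ℂ ⊗[ℂ] V)
          = ((reesE F x : ↥((ReesModule V F).restrictScalars ℂ)) : LaurentPolynomial ℂ ⊗[ℂ] V) :=
        congrArg Subtype.val hy
      have h2 : coeffV (-p) ((reesE F x : ↥((ReesModule V F).restrictScalars ℂ))
          : LaurentPolynomial ℂ ⊗[ℂ] V) = coeffV (-p - 1) (y : LaurentPolynomial ℂ ⊗[ℂ] V) := by
        rw [← hval, coeffV_X_smul]
      rw [coeffV_reesE, neg_neg] at h2
      have h3 := coeffV_mem_of_mem_rees hdec y.2 (-p - 1)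
      rw [show -(-p - 1) = p + 1 by ring] at h3
      rw [h2]
      exact h3
    · intro hmem
      rw [← DirectSum.sum_support_of x, map_sum]
      apply Finset.sum_eq_zero
      intro p _
      have h1 : reesGradedMap F (DirectSum.of _ p (x p)) = gradedToReesFiberZero F p (x p) := by
        rw [reesGradedMap, ← DirectSum.lof_eq_of ℂ, DirectSum.toModule_lof]
      rw [h1]
      exact gradedToReesFiberZero_eq_zero F (x p) (hmem p)
  -- Isomorphism
  refine ⟨hsurj, hker, ?_⟩
  set gbar : ∀ p : ℤ, (↥(F p) ⧸ Submodule.comap (F p).subtype (F (p + 1)))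
      →ₗ[ℂ] (↥(ReesModule V F) ⧸ lambdaRees F) :=
    fun p => Submodule.liftQ _ (gradedToReesFiberZero F p)
      (fun w hw => gradedToReesFiberZero_eq_zero F w hw) with hgbar
  set g : (⨁ p : ℤ, (↥(F p) ⧸ Submodule.comap (F p).subtype (F (p + 1))))
      →ₗ[ℂ] (↥(ReesModule V F) ⧸ lambdaRees F) := DirectSum.toModule ℂ ℤ _ gbar with hg
  set π : (⨁ p : ℤ, ↥(F p)) →ₗ[ℂ]
      ⨁ p : ℤ, (↥(F p) ⧸ Submodule.comap (F p).subtype (F (p + 1))) :=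
    DirectSum.toModule ℂ ℤ _
      (fun p => (DirectSum.lof ℂ ℤ (fun p : ℤ => (↥(F p) ⧸ Submodule.comap (F p).subtype (F (p + 1)))) p).comp
        (Submodule.mkQ _)) with hπ
  have hgπ : g.comp π = reesGradedMap F := by
    apply DirectSum.linearMap_ext
    intro p
    apply LinearMap.ext
    intro v
    simp only [LinearMap.comp_apply, hπ, hg, hgbar, reesGradedMap, DirectSum.toModule_lof,
      Submodule.mkQ_apply, Submodule.liftQ_apply]
    rfl
  have hπsurj : Function.Surjective π := by
    intro z
    induction z using DirectSum.induction_on with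
    | zero => exact ⟨0, map_zero _⟩
    | of p q =>
      obtain ⟨v, rfl⟩ := Submodule.mkQ_surjective _ q
      refine ⟨DirectSum.lof ℂ ℤ _ p v, ?_⟩
      rw [hπ, DirectSum.toModule_lof, LinearMap.comp_apply, Submodule.mkQ_apply,
        DirectSum.lof_eq_of]
    | add a b ha hb =>
      obtain ⟨xa, rfl⟩ := ha
      obtain ⟨xb, rfl⟩ := hb
      exact ⟨xa + xb, map_add _ _ _⟩
  have hg_surj : Function.Surjective g := by
    intro q
    obtain ⟨x, hx⟩ := hsurj q
    refine ⟨π x, ?_⟩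
    rw [← hx, ← hgπ, LinearMap.comp_apply]
  have hg_inj : Function.Injective g := by
    rw [← LinearMap.ker_eq_bot]
    rw [LinearMap.ker_eq_bot']
    intro z hz
    obtain ⟨x, rfl⟩ := hπsurj z
    have hx0 : reesGradedMap F x = 0 := by rw [← hgπ]; exact hz
    have hxm := (hker x).mp hx0
    rw [← DirectSum.sum_support_of x, map_sum]
    apply Finset.sum_eq_zero
    intro p _
    have h1 : π (DirectSum.of _ p (x p))
        = DirectSum.lof ℂ ℤ _ p ((Submodule.comap (F p).subtype (F (p + 1))).mkQ (x p)) := by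
      rw [hπ, ← DirectSum.lof_eq_of ℂ, DirectSum.toModule_lof]
      rfl
    rw [h1, Submodule.mkQ_apply]
    have h2 : (Submodule.Quotient.mk (x p) :
        ↥(F p) ⧸ Submodule.comap (F p).subtype (F (p + 1))) = 0 :=
      (Submodule.Quotient.mk_eq_zero _).mpr (hxm p)
    rw [h2, map_zero]
  exact ⟨(LinearEquiv.ofBijective g ⟨hg_inj, hg_surj⟩).symm⟩
end
end

section
/- Let f : V → W be a ℂ-linear map between two finite exhaustively and decreasingly filtered finite-dimensional complex vector spaces (V,F) and (W,G) with f(F p) ⊆ G p for all p. Then an element x of the Rees module ξ(V,F) satisfies (f ⊗ id)(x) = 0 if and only if x lies in the Rees module ξ(ker f, F') of the kernel of f equipped with the induced filtration F' p := F p ∩ ker f; that is, ker(f ⊗ id) ∩ ξ(V,F) = ξ(ker f, F') as ℂ[λ]-submodules of V ⊗_ℂ ℂ[λ,λ⁻¹]. (This is the paper's assertion that the Rees construction respects kernels: ker(ξ(f)) = ξ(ker(f)).) -/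
noncomputable section
open Polynomial LaurentPolynomial TensorProduct

set_option maxSynthPendingDepth 3

section Aux

variable (V : Type*) [AddCommGroup V] [Module ℂ V]

/-- The identification `ℂ[λ,λ⁻¹] ⊗[ℂ] V ≃ (ℤ →₀ V)`. -/
def reesEquiv : (LaurentPolynomial ℂ) ⊗[ℂ] V ≃ₗ[ℂ] (ℤ →₀ V) :=
  (TensorProduct.congr (AddMonoidAlgebra.coeffLinearEquiv ℂ) (LinearEquiv.refl ℂ V)).trans
    (TensorProduct.finsuppScalarLeft ℂ V ℤ)

/-- The `n`-th coefficient of an element of `ℂ[λ,λ⁻¹] ⊗[ℂ] V`. -/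
def reesCoeff (n : ℤ) : (LaurentPolynomial ℂ) ⊗[ℂ] V →ₗ[ℂ] V :=
  (Finsupp.lapply n).comp (reesEquiv V).toLinearMap

lemma reesCoeff_tmul (n : ℤ) (a : LaurentPolynomial ℂ) (v : V) :
    reesCoeff V n (a ⊗ₜ[ℂ] v) = a.coeff n • v := by
  rw [reesCoeff, LinearMap.comp_apply, LinearEquiv.coe_coe, reesEquiv, LinearEquiv.trans_apply,
    TensorProduct.congr_tmul]
  exact TensorProduct.finsuppScalarLeft_apply_tmul_apply a.coeff v n

lemma reesCoeff_T_tmul (n m : ℤ) (v : V) :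
    reesCoeff V n ((T m : LaurentPolynomial ℂ) ⊗ₜ[ℂ] v) = if m = n then v else 0 := by
  rw [reesCoeff_tmul, LaurentPolynomial.T_apply]
  split <;> simp

lemma T_mul_apply' (k : ℤ) (a : LaurentPolynomial ℂ) (n : ℤ) :
    ((T k : LaurentPolynomial ℂ) * a).coeff n = a.coeff (n - k) := by
  rw [show (T k : LaurentPolynomial ℂ) = AddMonoidAlgebra.single k 1 from rfl,
    AddMonoidAlgebra.coeff_single_mul_apply a 1 k n, one_mul, neg_add_eq_sub]

lemma reesCoeff_smul_T (n k : ℤ) (x : LaurentPolynomial ℂ ⊗[ℂ] V) :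
    reesCoeff V n ((T k : LaurentPolynomial ℂ) • x) = reesCoeff V (n - k) x := by
  induction x with
  | zero => simp
  | tmul a v =>
      rw [smul_tmul', smul_eq_mul, reesCoeff_tmul, reesCoeff_tmul, T_mul_apply']
  | add y z hy hz => rw [smul_add, map_add, map_add, hy, hz]

lemma poly_smul_rees (q : Polynomial ℂ) (x : LaurentPolynomial ℂ ⊗[ℂ] V) :
    q • x = (Polynomial.toLaurent q) • x := by
  induction x with
  | zero => simp
  | tmul a v =>
      rw [smul_tmul', smul_tmul']
      congr 1
  | add y z hy hz => rw [smul_add, smul_add, hy, hz]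

lemma C_smul_rees (a : ℂ) (x : LaurentPolynomial ℂ ⊗[ℂ] V) :
    (LaurentPolynomial.C a) • x = a • x := by
  induction x with
  | zero => simp
  | tmul b v =>
      rw [smul_tmul', smul_tmul']
      congr 1
      rw [Algebra.smul_def, Algebra.algebraMap_self_apply, Algebra.smul_def,
        ← LaurentPolynomial.C_eq_algebraMap]
  | add y z hy hz => rw [smul_add, smul_add, hy, hz]

lemma decomp_rees (x : LaurentPolynomial ℂ ⊗[ℂ] V) :
    x = (reesEquiv V x).sum (fun n v => (T n : LaurentPolynomial ℂ) ⊗ₜ[ℂ] v) := by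
  conv_lhs => rw [← (reesEquiv V).symm_apply_apply x, ← Finsupp.sum_single (reesEquiv V x)]
  rw [map_finsuppSum]
  refine Finsupp.sum_congr fun n _ => ?_
  simp only [reesEquiv, LinearEquiv.trans_symm, LinearEquiv.trans_apply,
    TensorProduct.finsuppScalarLeft_symm_apply_single, TensorProduct.congr_symm_tmul]
  rfl

lemma reesEquiv_apply (x : LaurentPolynomial ℂ ⊗[ℂ] V) (n : ℤ) :
    reesEquiv V x n = reesCoeff V n x := rfl

lemma mem_coeff_rees {F : ℤ → Submodule ℂ V} (hFdec : ∀ p : ℤ, F (p + 1) ≤ F p)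
    {x : LaurentPolynomial ℂ ⊗[ℂ] V} (hx : x ∈ ReesModule V F) (n : ℤ) :
    reesCoeff V n x ∈ F (-n) := by
  have hF : Antitone F := antitone_int_of_succ_le hFdec
  induction hx using Submodule.span_induction generalizing n with
  | mem y hy =>
      obtain ⟨p, v, hv, rfl⟩ := hy
      rw [reesCoeff_T_tmul]
      split
      · next h => exact hF (by omega) hv
      · exact Submodule.zero_mem _
  | zero => simp
  | add y z hy hz ihy ihz => rw [map_add]; exact Submodule.add_mem _ (ihy n) (ihz n)
  | smul q y hy ihy =>
      rw [poly_smul_rees]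
      induction q using Polynomial.induction_on' generalizing n with
      | add p r ihp ihr =>
          rw [map_add, add_smul, map_add]
          exact Submodule.add_mem _ (ihp n) (ihr n)
      | monomial k a =>
          rw [Polynomial.toLaurent_C_mul_T, mul_smul, C_smul_rees, map_smul, reesCoeff_smul_T]
          exact Submodule.smul_mem _ _ (hF (by omega) (ihy (n - k)))

variable (W : Type*) [AddCommGroup W] [Module ℂ W]

lemma reesCoeff_baseChange (f : V →ₗ[ℂ] W) (n : ℤ) (x : LaurentPolynomial ℂ ⊗[ℂ] V) :
    reesCoeff W n (f.baseChange (LaurentPolynomial ℂ) x) = f (reesCoeff V n x) := by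
  induction x with
  | zero => simp
  | tmul a v => rw [LinearMap.baseChange_tmul, reesCoeff_tmul, reesCoeff_tmul, map_smul]
  | add y z hy hz => rw [map_add, map_add, map_add, hy, hz]; rw [map_add]

end Aux


/-- Let `f : (V,F) → (W,G)` be a `ℂ`-linear map of finite
exhaustively and decreasingly filtered finite-dimensional complex vector spaces with
`f (F p) ⊆ G p` for all `p`.  Then an element `x ∈ ξ(V,F)` satisfies `(f ⊗ id) x = 0`
iff `x` lies in the Rees module `ξ(ker f, F')` of the kernel with its induced filtration
`F' p = F p ⊓ ker f`; that is, `ker (f ⊗ id) ∩ ξ(V,F) = ξ(ker f, F')` as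
`ℂ[λ]`-submodules of `V ⊗_ℂ ℂ[λ,λ⁻¹]`. -/
theorem reesModule_ker
    (V : Type*) [AddCommGroup V] [Module ℂ V] [FiniteDimensional ℂ V]
    (W : Type*) [AddCommGroup W] [Module ℂ W] [FiniteDimensional ℂ W]
    (F : ℤ → Submodule ℂ V) (G : ℤ → Submodule ℂ W)
    (hFdec : ∀ p : ℤ, F (p + 1) ≤ F p)
    (hFfin : ∃ a b : ℤ, a ≤ b ∧ (∀ p ≤ a, F p = ⊤) ∧ (∀ p, b ≤ p → F p = ⊥))
    (hGdec : ∀ p : ℤ, G (p + 1) ≤ G p)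
    (hGfin : ∃ a b : ℤ, a ≤ b ∧ (∀ p ≤ a, G p = ⊤) ∧ (∀ p, b ≤ p → G p = ⊥))
    (f : V →ₗ[ℂ] W) (hf : ∀ p : ℤ, (F p).map f ≤ G p) :
    (∀ x ∈ ReesModule V F,
      ((f.baseChange (LaurentPolynomial ℂ)) x = 0 ↔
        x ∈ ReesModule V (fun p => F p ⊓ LinearMap.ker f))) ∧
    ReesModule V F ⊓
        LinearMap.ker ((f.baseChange (LaurentPolynomial ℂ)).restrictScalars (Polynomial ℂ))
      = ReesModule V (fun p => F p ⊓ LinearMap.ker f) := by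
  have easy1 : ReesModule V (fun p => F p ⊓ LinearMap.ker f) ≤ ReesModule V F := by
    apply Submodule.span_mono
    rintro x ⟨p, v, hv, rfl⟩
    exact ⟨p, v, (Submodule.mem_inf.1 hv).1, rfl⟩
  have easy2 : ∀ x ∈ ReesModule V (fun p => F p ⊓ LinearMap.ker f),
      f.baseChange (LaurentPolynomial ℂ) x = 0 := by
    intro x hx
    induction hx using Submodule.span_induction with
    | mem y hy =>
        obtain ⟨p, v, hv, rfl⟩ := hy
        rw [LinearMap.baseChange_tmul, LinearMap.mem_ker.1 (Submodule.mem_inf.1 hv).2,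
          tmul_zero]
    | zero => simp
    | add y z _ _ ihy ihz => rw [map_add, ihy, ihz, add_zero]
    | smul q y _ ihy => rw [poly_smul_rees, map_smul, ihy, smul_zero]
  have hard : ∀ x ∈ ReesModule V F, f.baseChange (LaurentPolynomial ℂ) x = 0 →
      x ∈ ReesModule V (fun p => F p ⊓ LinearMap.ker f) := by
    intro x hx hfx
    have h1 : ∀ n : ℤ, reesCoeff V n x ∈ F (-n) := mem_coeff_rees V hFdec hx
    have h2 : ∀ n : ℤ, f (reesCoeff V n x) = 0 := by
      intro n; rw [← reesCoeff_baseChange, hfx, map_zero]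
    rw [decomp_rees V x]
    apply Submodule.finsuppSum_mem
    intro n _
    apply Submodule.subset_span
    refine ⟨-n, reesEquiv V x n, ?_, by rw [neg_neg]⟩
    rw [reesEquiv_apply]
    exact Submodule.mem_inf.2 ⟨h1 n, LinearMap.mem_ker.2 (h2 n)⟩
  constructor
  · intro x hx
    exact ⟨hard x hx, fun h => easy2 x h⟩
  · apply le_antisymm
    · rintro x hx
      obtain ⟨hx1, hx2⟩ := Submodule.mem_inf.1 hx
      exact hard x hx1 (by simpa using hx2)
    · intro x hx
      refine Submodule.mem_inf.2 ⟨easy1 hx, ?_⟩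
      simpa [LinearMap.mem_ker] using easy2 x hx
end
end
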